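/- Let G = (ℤ/2) ⋆ (ℤ/3) with generators a of order 2 and b of order 3. Then scl_G(ab) = 1/12. -/

import Mathlib

open Monoid
open scoped ENNReal
open scoped commutatorElement

variable {G : Type*} [Group G]

/-- The set of `n` such that `g` is a product of `n` commutators. -/
def clSet (g : G) : Set ℕ :=
  {n | ∃ f : Fin n → G × G, g = (List.ofFn fun i => ⁅(f i).1, (f i).2⁆).prod}

/-- Commutator length, valued in `ℝ≥0∞`; it is `⊤` if `g` is not a product of commutators. -/
noncomputable def clE (g : G) : ℝ≥0∞ :=
  sInf ((fun n : ℕ => (n : ℝ≥0∞)) '' clSet g)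

/-- Stable commutator length `scl_G(g) = lim_n cl(g^n)/n`, equivalently the infimum of
`cl(g^n)/n`. -/
noncomputable def sclE (g : G) : ℝ≥0∞ :=
  ⨅ n : ℕ+, clE (g ^ (n : ℕ)) / ((n : ℕ) : ℝ≥0∞)

section clSetLemmas

variable {H : Type*} [Group H]

lemma clSet_mul {g h : G} {m n : ℕ} (hg : m ∈ clSet g) (hh : n ∈ clSet h) :
    m + n ∈ clSet (g * h) := by
  obtain ⟨f₁, hf₁⟩ := hg
  obtain ⟨f₂, hf₂⟩ := hh
  refine ⟨Fin.append f₁ f₂, ?_⟩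
  rw [List.ofFn_add]
  simp only [Fin.append_left', Fin.append_right, List.prod_append]
  rw [hf₁, hf₂]

lemma clSet_map (f : G →* H) {g : G} {n : ℕ} (hg : n ∈ clSet g) : n ∈ clSet (f g) := by
  obtain ⟨w, hw⟩ := hg
  refine ⟨fun i => (f (w i).1, f (w i).2), ?_⟩
  rw [hw, map_list_prod, List.map_ofFn]
  simp [Function.comp_def, map_commutatorElement]

lemma clSet_conj {g : G} (t : G) {n : ℕ} (hg : n ∈ clSet g) : n ∈ clSet (t * g * t⁻¹) := by
  have := clSet_map (MulAut.conj t).toMonoidHom hg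
  simpa [MulAut.conj_apply, mul_assoc] using this

lemma one_mem_clSet_comm (x y : G) : 1 ∈ clSet ⁅x, y⁆ :=
  ⟨fun _ => (x, y), by simp⟩

lemma one_mem_clSet_conj_comm (t x y : G) : 1 ∈ clSet (t * ⁅x, y⁆ * t⁻¹) :=
  clSet_conj t (one_mem_clSet_comm x y)

end clSetLemmas

/-! ### Culler-type upper bound for commutator length of powers of a commutator -/

section Culler

/-- `rr x y = y⁻¹ x y x⁻¹`, a cyclic rotation of the commutator `[x,y]`. -/
def rr (x y : G) : G := y⁻¹ * x * y * x⁻¹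

/-- `Vel x y T = y⁻¹ x y² x⁻¹ T y⁻¹`. -/
def Vel (x y T : G) : G := y⁻¹ * x * y * y * x⁻¹ * T * y⁻¹

lemma vel_base (x y : G) : Vel x y 1 = y⁻¹ * ⁅x, y * y⁆ * y⁻¹⁻¹ := by
  simp only [Vel, commutatorElement_def]
  group

lemma vel_step (x y T : G) :
    Vel x y (rr x y * (rr x y * T)) =
      (y⁻¹ * ⁅x, y * y * x⁻¹ * y⁻¹ * x * y * x⁻¹⁆ * y⁻¹⁻¹) *
        (y * Vel y⁻¹ x (x⁻¹ * T * x) * y⁻¹) := by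
  simp only [Vel, rr, commutatorElement_def]
  group

lemma vel_mem : ∀ (j : ℕ) (x y : G), (j + 1) ∈ clSet (Vel x y ((rr x y) ^ (2 * j))) := by
  intro j
  induction j with
  | zero =>
    intro x y
    rw [mul_zero, pow_zero, vel_base]
    exact one_mem_clSet_conj_comm _ _ _
  | succ j ih =>
    intro x y
    have h2 : (rr x y) ^ (2 * (j + 1)) = rr x y * (rr x y * (rr x y) ^ (2 * j)) := by
      rw [mul_add, pow_add]
      ring_nf
      rw [pow_two]
      group
    rw [h2, vel_step]
    have hT : x⁻¹ * (rr x y) ^ (2 * j) * x = (rr y⁻¹ x) ^ (2 * j) := by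
      have : rr y⁻¹ x = x⁻¹ * rr x y * x⁻¹⁻¹ := by simp only [rr]; group
      rw [this, conj_pow]
      group
    rw [hT]
    have : j + 1 + 1 = 1 + (j + 1) := by ring
    rw [this]
    exact clSet_mul (one_mem_clSet_conj_comm _ _ _)
      (clSet_conj y (ih y⁻¹ x))

lemma comm_cube_identity (x y T : G) :
    ⁅x, y⁆ ^ (2 * 1 + 1) * (y * T * y⁻¹) =
      (x * ⁅y, x⁻¹ * rr x y * y⁻¹⁆ * x⁻¹) * Vel x y T := by
  norm_num [Vel, rr, commutatorElement_def, pow_succ]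
  group

lemma comm_pow_conj (x y : G) (j : ℕ) : ⁅x, y⁆ ^ j = y * (rr x y) ^ j * y⁻¹ := by
  have : ⁅x, y⁆ = y * rr x y * y⁻¹ := by
    simp only [rr, commutatorElement_def]; group
  rw [this, conj_pow]

/-- Culler: `[x,y]^(2k+1)` is a product of `k+1` commutators. -/
lemma culler (k : ℕ) (x y : G) : (k + 1) ∈ clSet (⁅x, y⁆ ^ (2 * k + 1)) := by
  cases k with
  | zero => simpa using one_mem_clSet_comm x y
  | succ k =>
    have hsplit : ⁅x, y⁆ ^ (2 * (k+1) + 1) = ⁅x, y⁆ ^ (2 * 1 + 1) * (y * (rr x y) ^ (2*k) * y⁻¹) := by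
      rw [← comm_pow_conj, ← pow_add]
      ring_nf
    rw [hsplit, comm_cube_identity]
    have : k + 1 + 1 = 1 + (k + 1) := by ring
    rw [this]
    exact clSet_mul (one_mem_clSet_conj_comm _ _ _) (vel_mem k x y)

end Culler





section Relations
variable {a b : G} (ha : a * a = 1) (hb : b * b * b = 1)

include ha hb in
lemma ab_six_comm :
    (a * b) ^ 6 = (a * b * b)⁻¹ * ⁅a * b * b * a * b, a * b * a * b * b⁆ * (a * b * b) := by
  have ha' : a⁻¹ = a := by
    rw [← mul_one a⁻¹, ← ha, ← mul_assoc, inv_mul_cancel, one_mul]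
  have hb' : b⁻¹ = b * b := by
    rw [← mul_one b⁻¹, ← hb]
    group
  have ha2 : ∀ z : G, a * (a * z) = z := fun z => by rw [← mul_assoc, ha, one_mul]
  have hb3 : ∀ z : G, b * (b * (b * z)) = z := fun z => by
    rw [← mul_assoc, ← mul_assoc, hb, one_mul]
  have hbb : b * (b * b) = 1 := by rw [← mul_assoc, hb]
  simp only [commutatorElement_def, mul_inv_rev, ha', hb', pow_succ, pow_zero, one_mul,
    mul_assoc]
  simp only [ha2, hb3, ha, hbb, mul_one, one_mul]
end Relations



open Monoid

namespace SclLower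

/-- Letters of normal-form words in `(ℤ/2) ⋆ (ℤ/3)`. -/
inductive Ltr : Type
  | A : Ltr
  | B1 : Ltr
  | B2 : Ltr
deriving DecidableEq

open Ltr

/-- whether a letter comes from the second (order 3) factor -/
def bty : Ltr → Bool
  | A => false
  | B1 => true
  | B2 => true

/-- a word is reduced if letters alternate between the two factors -/
def Reduced : List Ltr → Prop := List.IsChain (fun p q => bty p ≠ bty q)

lemma reduced_nil : Reduced [] := List.isChain_nil

lemma reduced_tail {l : Ltr} {t : List Ltr} (h : Reduced (l :: t)) : Reduced t :=
  List.IsChain.tail h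

/-- The type of reduced words. -/
def Red : Type := {w : List Ltr // Reduced w}

/-- raw left multiplication by `a` -/
def rawA : List Ltr → List Ltr
  | A :: t => t
  | w => A :: w

/-- raw left multiplication by `b` -/
def rawB : List Ltr → List Ltr
  | B1 :: t => B2 :: t
  | B2 :: t => t
  | w => B1 :: w

lemma reduced_cons_of {l : Ltr} {t : List Ltr} (h : Reduced t)
    (hh : ∀ x ∈ t.head?, bty l ≠ bty x) : Reduced (l :: t) := by
  cases t with
  | nil => exact List.isChain_singleton l
  | cons x s =>
    exact List.isChain_cons_cons.mpr ⟨hh x rfl, h⟩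

lemma rawA_reduced {w : List Ltr} (h : Reduced w) : Reduced (rawA w) := by
  cases w with
  | nil => exact List.isChain_singleton A
  | cons l t =>
    cases l with
    | A => exact reduced_tail h
    | B1 =>
      exact reduced_cons_of h (by intro x hx; simp at hx; subst hx; simp [bty])
    | B2 =>
      exact reduced_cons_of h (by intro x hx; simp at hx; subst hx; simp [bty])

lemma rawB_reduced {w : List Ltr} (h : Reduced w) : Reduced (rawB w) := by
  cases w with
  | nil => exact List.isChain_singleton B1
  | cons l t =>
    cases l with
    | A =>
      exact reduced_cons_of h (by intro x hx; simp at hx; subst hx; simp [bty])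
    | B1 =>
      refine reduced_cons_of (reduced_tail h) ?_
      intro x hx
      cases t with
      | nil => simp at hx
      | cons y s =>
        simp at hx; subst hx
        have := (List.isChain_cons_cons.mp h).1
        simpa [bty] using this
    | B2 => exact reduced_tail h

/-- the permutation of reduced words given by left multiplication by `a` -/
def piA : Function.End Red := fun w => ⟨rawA w.1, rawA_reduced w.2⟩

/-- the permutation of reduced words given by left multiplication by `b` -/
def piB : Function.End Red := fun w => ⟨rawB w.1, rawB_reduced w.2⟩

lemma end_mul (f g : Function.End Red) (x : Red) : (f * g) x = f (g x) := rfl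

lemma piA_sq : piA * piA = 1 := by
  funext w
  rcases w with ⟨w, hw⟩
  apply Subtype.ext
  show rawA (rawA w) = w
  match w, hw with
  | [], _ => rfl
  | A :: t, hw =>
    show rawA t = A :: t
    match t, hw with
    | [], _ => rfl
    | B1 :: s, _ => rfl
    | B2 :: s, _ => rfl
    | A :: s, hw => exact absurd (List.isChain_cons_cons.mp hw).1 (by simp [bty])
  | B1 :: t, _ => rfl
  | B2 :: t, _ => rfl

lemma piB_cube : piB * piB * piB = 1 := by
  funext w
  rcases w with ⟨w, hw⟩
  apply Subtype.ext
  show rawB (rawB (rawB w)) = w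
  match w, hw with
  | [], _ => rfl
  | A :: t, _ => rfl
  | B1 :: t, hw =>
    show rawB t = B1 :: t
    match t, hw with
    | [], _ => rfl
    | A :: s, _ => rfl
    | B1 :: s, hw => exact absurd (List.isChain_cons_cons.mp hw).1 (by simp [bty])
    | B2 :: s, hw => exact absurd (List.isChain_cons_cons.mp hw).1 (by simp [bty])
  | B2 :: t, hw =>
    show rawB (rawB t) = B2 :: t
    match t, hw with
    | [], _ => rfl
    | A :: s, _ => rfl
    | B1 :: s, hw => exact absurd (List.isChain_cons_cons.mp hw).1 (by simp [bty])
    | B2 :: s, hw => exact absurd (List.isChain_cons_cons.mp hw).1 (by simp [bty])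

/-- homomorphism from `Multiplicative (ZMod n)` induced by an element with `m ^ n = 1`. -/
def homOfPow {M : Type*} [Monoid M] (n : ℕ) [NeZero n] (m : M) (h : m ^ n = 1) :
    Multiplicative (ZMod n) →* M where
  toFun u := m ^ (Multiplicative.toAdd u).val
  map_one' := by simp
  map_mul' u v := by
    have key : ∀ j, m ^ (j % n) = m ^ j := by
      intro j
      conv_rhs => rw [← Nat.div_add_mod j n]
      rw [pow_add, pow_mul, h, one_pow, one_mul]
    show m ^ ((Multiplicative.toAdd (u * v)).val) = _
    rw [toAdd_mul, ZMod.val_add, key, pow_add]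

/-- The group `(ℤ/2) ⋆ (ℤ/3)`. -/
abbrev GG := Coprod (Multiplicative (ZMod 2)) (Multiplicative (ZMod 3))

lemma piA_pow2 : piA ^ 2 = 1 := by rw [pow_two]; exact piA_sq
lemma piB_pow3 : piB ^ 3 = 1 := by
  have : piB ^ 3 = piB * piB * piB := by
    rw [pow_succ, pow_two]
  rw [this]; exact piB_cube

/-- the action of `GG` on reduced words -/
def rho : GG →* Function.End Red :=
  Coprod.lift (homOfPow 2 piA piA_pow2) (homOfPow 3 piB piB_pow3)

/-- letterwise action -/
def actL : Ltr → Red → Red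
  | A => piA
  | B1 => piB
  | B2 => fun v => piB (piB v)

/-- action of a word on reduced words -/
def actW : List Ltr → Red → Red := fun w v => w.foldr actL v

/-- group element represented by a letter -/
def gen : Ltr → GG
  | A => Coprod.inl (Multiplicative.ofAdd (1 : ZMod 2))
  | B1 => Coprod.inr (Multiplicative.ofAdd (1 : ZMod 3))
  | B2 => Coprod.inr (Multiplicative.ofAdd (2 : ZMod 3))

/-- group element represented by a word -/
def gE : List Ltr → GG := fun w => (w.map gen).prod

lemma rho_gen (l : Ltr) : rho (gen l) = actL l := by
  cases l with
  | A =>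
    show Coprod.lift _ _ (Coprod.inl _) = _
    rw [Coprod.lift_apply_inl]
    show piA ^ (Multiplicative.toAdd (Multiplicative.ofAdd (1 : ZMod 2))).val = _
    have : (Multiplicative.toAdd (Multiplicative.ofAdd (1 : ZMod 2))).val = 1 := by decide
    rw [this, pow_one]; rfl
  | B1 =>
    show Coprod.lift _ _ (Coprod.inr _) = _
    rw [Coprod.lift_apply_inr]
    show piB ^ (Multiplicative.toAdd (Multiplicative.ofAdd (1 : ZMod 3))).val = _
    have : (Multiplicative.toAdd (Multiplicative.ofAdd (1 : ZMod 3))).val = 1 := by decide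
    rw [this, pow_one]; rfl
  | B2 =>
    show Coprod.lift _ _ (Coprod.inr _) = _
    rw [Coprod.lift_apply_inr]
    show piB ^ (Multiplicative.toAdd (Multiplicative.ofAdd (2 : ZMod 3))).val = _
    have : (Multiplicative.toAdd (Multiplicative.ofAdd (2 : ZMod 3))).val = 2 := by decide
    rw [this, pow_two]
    funext v
    exact end_mul piB piB v

lemma act_eq (w : List Ltr) (v : Red) : actW w v = rho (gE w) v := by
  induction w with
  | nil =>
    show v = rho 1 v
    rw [map_one]; rfl
  | cons l t ih =>
    show actL l (actW t v) = rho (gen l * gE t) v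
    rw [map_mul, end_mul, ← rho_gen l, ih]

end SclLower

namespace SclLower
open Ltr

lemma genA_mul : gen A * gen A = 1 := by
  show Coprod.inl _ * Coprod.inl _ = 1
  rw [← map_mul]
  have : (Multiplicative.ofAdd (1 : ZMod 2)) * (Multiplicative.ofAdd (1 : ZMod 2)) = 1 := by decide
  rw [this, map_one]

lemma genB1_mul : gen B1 * gen B1 = gen B2 := by
  show Coprod.inr _ * Coprod.inr _ = Coprod.inr _
  rw [← map_mul]
  have : (Multiplicative.ofAdd (1 : ZMod 3)) * (Multiplicative.ofAdd (1 : ZMod 3)) =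
      Multiplicative.ofAdd (2 : ZMod 3) := by decide
  rw [this]

lemma genB1_B2 : gen B1 * gen B2 = 1 := by
  show Coprod.inr _ * Coprod.inr _ = 1
  rw [← map_mul]
  have : (Multiplicative.ofAdd (1 : ZMod 3)) * (Multiplicative.ofAdd (2 : ZMod 3)) = 1 := by decide
  rw [this, map_one]

lemma gE_cons (l : Ltr) (t : List Ltr) : gE (l :: t) = gen l * gE t := by
  simp [gE]

lemma gE_piB (v : Red) : gE (piB v).1 = gen B1 * gE v.1 := by
  rcases v with ⟨w, hw⟩
  show gE (rawB w) = gen B1 * gE w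
  match w with
  | [] => simp [rawB, gE]
  | A :: t => simp [rawB, gE_cons]
  | B1 :: t =>
    show gE (B2 :: t) = gen B1 * gE (B1 :: t)
    rw [gE_cons, gE_cons, ← mul_assoc, genB1_mul]
  | B2 :: t =>
    show gE t = gen B1 * gE (B2 :: t)
    rw [gE_cons, ← mul_assoc, genB1_B2, one_mul]

lemma gE_actL (l : Ltr) (v : Red) : gE (actL l v).1 = gen l * gE v.1 := by
  cases l with
  | A =>
    rcases v with ⟨w, hw⟩
    show gE (rawA w) = gen A * gE w
    match w with
    | [] => simp [rawA, gE]
    | A :: t =>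
      show gE t = gen A * gE (A :: t)
      rw [gE_cons, ← mul_assoc, genA_mul, one_mul]
    | B1 :: t => simp [rawA, gE_cons]
    | B2 :: t => simp [rawA, gE_cons]
  | B1 => exact gE_piB v
  | B2 =>
    show gE (piB (piB v)).1 = gen B2 * gE v.1
    rw [gE_piB, gE_piB, ← mul_assoc, genB1_mul]

lemma gE_actW (w : List Ltr) (v : Red) : gE (actW w v).1 = gE w * gE v.1 := by
  induction w with
  | nil => simp [actW, gE]
  | cons l t ih =>
    show gE (actL l (actW t v)).1 = gE (l :: t) * gE v.1
    rw [gE_actL, ih, gE_cons, mul_assoc]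

/-- empty reduced word -/
def eps : Red := ⟨[], reduced_nil⟩

/-- normal form of a group element -/
def nf : GG → Red := fun u => rho u eps

lemma rho_eq_actW_nf : ∀ u : GG, ∀ v : Red, rho u v = actW (nf u).1 v := by
  intro u
  induction u using Coprod.induction_on with
  | inl m =>
    have hm := (by decide : ∀ x : Multiplicative (ZMod 2),
      x = 1 ∨ x = Multiplicative.ofAdd (1 : ZMod 2)) m
    rcases hm with h | h <;> subst h
    · intro v
      rw [map_one]
      show v = actW (nf 1).1 v
      have : nf 1 = eps := by show rho 1 eps = eps; rw [map_one]; rfl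
      rw [this]; rfl
    · intro v
      have hg : (Coprod.inl (Multiplicative.ofAdd (1 : ZMod 2)) : GG) = gen A := rfl
      rw [hg, rho_gen]
      have : nf (gen A) = actL A eps := by
        show rho (gen A) eps = actL A eps
        rw [rho_gen]
      rw [this]
      rfl
  | inr m =>
    have hm := (by decide : ∀ x : Multiplicative (ZMod 3),
      x = 1 ∨ x = Multiplicative.ofAdd (1 : ZMod 3) ∨
        x = Multiplicative.ofAdd (2 : ZMod 3)) m
    rcases hm with h | h | h <;> subst h
    · intro v
      rw [map_one]
      show v = actW (nf 1).1 v
      have : nf 1 = eps := by show rho 1 eps = eps; rw [map_one]; rfl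
      rw [this]; rfl
    · intro v
      have hg : (Coprod.inr (Multiplicative.ofAdd (1 : ZMod 3)) : GG) = gen B1 := rfl
      rw [hg, rho_gen]
      have : nf (gen B1) = actL B1 eps := by
        show rho (gen B1) eps = actL B1 eps
        rw [rho_gen]
      rw [this]
      rfl
    · intro v
      have hg : (Coprod.inr (Multiplicative.ofAdd (2 : ZMod 3)) : GG) = gen B2 := rfl
      rw [hg, rho_gen]
      have : nf (gen B2) = actL B2 eps := by
        show rho (gen B2) eps = actL B2 eps
        rw [rho_gen]
      rw [this]
      rfl
  | mul u v ihu ihv =>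
    intro w
    rw [map_mul, end_mul, ihv, ihu]
    have h1 : nf (u * v) = actW (nf u).1 (nf v) := by
      show rho (u * v) eps = _
      rw [map_mul, end_mul, ihu (rho v eps)]
      rfl
    rw [act_eq (nf (u*v)).1 w, h1, gE_actW, map_mul, end_mul, ← act_eq, ← act_eq]

lemma nf_mul (u v : GG) : nf (u * v) = actW (nf u).1 (nf v) := by
  show rho (u * v) eps = _
  rw [map_mul, end_mul, rho_eq_actW_nf u]
  rfl

end SclLower

namespace SclLower
open Ltr

/-- weight of a letter -/
def sgn : Ltr → ℤ
  | A => 0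
  | B1 => 1
  | B2 => -1

/-- weight of a word: (number of `b`) - (number of `b²`) -/
def F : List Ltr → ℤ := fun w => (w.map sgn).sum

lemma F_nil : F [] = 0 := rfl
lemma F_cons (l : Ltr) (t : List Ltr) : F (l :: t) = sgn l + F t := by simp [F]
lemma F_app (x y : List Ltr) : F (x ++ y) = F x + F y := by simp [F]

lemma actW_append (t : List Ltr) (l : Ltr) (v : Red) :
    actW (t ++ [l]) v = actW t (actL l v) := by
  simp [actW, List.foldr_append]

lemma rawB_prepend {t : List Ltr} (h : ∀ x ∈ t.head?, bty x = false) :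
    rawB t = B1 :: t := by
  match t with
  | [] => rfl
  | A :: s => rfl
  | B1 :: s => exact absurd (h B1 rfl) (by simp [bty])
  | B2 :: s => exact absurd (h B2 rfl) (by simp [bty])

lemma actL_prepend (l : Ltr) (v : Red) (h : ∀ x ∈ v.1.head?, bty l ≠ bty x) :
    (actL l v).1 = l :: v.1 := by
  rcases v with ⟨w, hw⟩
  cases l with
  | A =>
    match w with
    | [] => rfl
    | A :: s => exact absurd (h A rfl) (by simp [bty])
    | B1 :: s => rfl
    | B2 :: s => rfl
  | B1 =>
    show rawB w = B1 :: w
    refine rawB_prepend ?_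
    intro x hx
    have := h x hx
    simp [bty] at this ⊢
    cases x <;> simp_all [bty]
  | B2 =>
    show rawB (rawB w) = B2 :: w
    have h1 : rawB w = B1 :: w := by
      refine rawB_prepend ?_
      intro x hx
      have := h x hx
      cases x <;> simp_all [bty]
    rw [h1]
    rfl

lemma reduced_of_append_left {t s : List Ltr} (h : Reduced (t ++ s)) : Reduced t :=
  (List.isChain_append.mp h).1

lemma noCancel : ∀ (t : List Ltr) (v : Red), Reduced (t ++ v.1) →
    (actW t v).1 = t ++ v.1 := by
  intro t
  induction t using List.reverseRecOn with
  | nil => intro v _; rfl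
  | append_singleton t l ih =>
    intro v hred
    rw [actW_append]
    have hred' := hred
    rw [List.append_assoc] at hred'
    obtain ⟨ht, hlv, hjun⟩ := List.isChain_append.mp hred'
    have hj : ∀ x ∈ v.1.head?, bty l ≠ bty x := by
      intro x hx
      exact (List.isChain_cons.mp hlv).1 x hx
    have hp := actL_prepend l v hj
    have hred2 : Reduced (t ++ (actL l v).1) := by rw [hp]; exact hred'
    rw [ih _ hred2, hp]
    simp

lemma core : ∀ (t : List Ltr), Reduced t → ∀ v : Red,
    |F (actW t v).1 - F t - F v.1| ≤ 3 := by
  intro t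
  induction t using List.reverseRecOn with
  | nil =>
    intro _ v
    show |F v.1 - F [] - F v.1| ≤ 3
    simp [F_nil]
  | append_singleton t l ih =>
    intro hred v
    have hredt : Reduced t := reduced_of_append_left hred
    have IH := ih hredt
    have hjun : ∀ x ∈ t.getLast?, bty x ≠ bty l := by
      obtain ⟨_, _, hj⟩ := List.isChain_append.mp hred
      intro x hx
      exact hj x hx l rfl
    rw [actW_append, F_app]
    -- case analysis on letter and head of v
    rcases v with ⟨w, hw⟩
    have hPrep : ∀ (hj : ∀ x ∈ (⟨w, hw⟩ : Red).1.head?, bty l ≠ bty x),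
        |F (actW t (actL l ⟨w, hw⟩)).1 - (F t + F [l]) - F w| ≤ 3 := by
      intro hj
      have h := IH (actL l ⟨w, hw⟩)
      rw [actL_prepend l _ hj, F_cons] at h
      rw [abs_le] at h ⊢
      simp only [F_cons, F_nil] at *
      constructor <;> omega
    cases l with
    | A =>
      match w, hw with
      | [], hw => exact hPrep (by simp)
      | B1 :: s, hw => exact hPrep (by simp [bty])
      | B2 :: s, hw => exact hPrep (by simp [bty])
      | A :: s, hw =>
        -- cancellation
        have hs : (actL A (⟨A :: s, hw⟩ : Red)).1 = s := rfl
        have h := IH (actL A ⟨A :: s, hw⟩)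
        rw [hs] at h
        rw [abs_le] at h ⊢
        simp only [F_cons, F_nil, sgn] at *
        constructor <;> omega
    | B1 =>
      match w, hw with
      | [], hw => exact hPrep (by simp)
      | A :: s, hw => exact hPrep (by simp [bty])
      | B2 :: s, hw =>
        -- cancellation b * b² = 1
        have hs : (actL B1 (⟨B2 :: s, hw⟩ : Red)).1 = s := rfl
        have h := IH (actL B1 ⟨B2 :: s, hw⟩)
        rw [hs] at h
        rw [abs_le] at h ⊢
        simp only [F_cons, F_nil, sgn] at *
        constructor <;> omega
      | B1 :: s, hw =>
        -- merge b * b = b²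
        have hs : (actL B1 (⟨B1 :: s, hw⟩ : Red)).1 = B2 :: s := rfl
        have hred2 : Reduced (t ++ (actL B1 (⟨B1 :: s, hw⟩ : Red)).1) := by
          rw [hs]
          refine List.isChain_append.mpr ⟨hredt, ?_, ?_⟩
          · cases s with
            | nil => exact List.isChain_singleton _
            | cons y r =>
              refine List.isChain_cons_cons.mpr ⟨?_, (List.isChain_cons_cons.mp hw).2⟩
              have := (List.isChain_cons_cons.mp hw).1
              simpa [bty] using this
          · intro x hx y hy
            simp at hy
            subst hy
            simpa [bty] using hjun x hx
        rw [noCancel t _ hred2, hs, F_app]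
        rw [abs_le]
        simp only [F_cons, F_nil, sgn]
        constructor <;> omega
    | B2 =>
      match w, hw with
      | [], hw => exact hPrep (by simp)
      | A :: s, hw => exact hPrep (by simp [bty])
      | B1 :: s, hw =>
        -- cancellation b² * b = 1
        have hs : (actL B2 (⟨B1 :: s, hw⟩ : Red)).1 = s := rfl
        have h := IH (actL B2 ⟨B1 :: s, hw⟩)
        rw [hs] at h
        rw [abs_le] at h ⊢
        simp only [F_cons, F_nil, sgn] at *
        constructor <;> omega
      | B2 :: s, hw =>
        -- merge b² * b² = b
        have hshead : ∀ x ∈ s.head?, bty x = false := by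
          intro x hx
          cases s with
          | nil => simp at hx
          | cons y r =>
            simp at hx
            subst hx
            have := (List.isChain_cons_cons.mp hw).1
            cases y <;> simp_all [bty]
        have hs : (actL B2 (⟨B2 :: s, hw⟩ : Red)).1 = B1 :: s := by
          show rawB (rawB (B2 :: s)) = B1 :: s
          show rawB s = B1 :: s
          exact rawB_prepend hshead
        have hred2 : Reduced (t ++ (actL B2 (⟨B2 :: s, hw⟩ : Red)).1) := by
          rw [hs]
          refine List.isChain_append.mpr ⟨hredt, ?_, ?_⟩
          · cases s with
            | nil => exact List.isChain_singleton _
            | cons y r =>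
              refine List.isChain_cons_cons.mpr ⟨?_, (List.isChain_cons_cons.mp hw).2⟩
              have := (List.isChain_cons_cons.mp hw).1
              simpa [bty] using this
          · intro x hx y hy
            simp at hy
            subst hy
            simpa [bty] using hjun x hx
        rw [noCancel t _ hred2, hs, F_app]
        rw [abs_le]
        simp only [F_cons, F_nil, sgn]
        constructor <;> omega

end SclLower

namespace SclLower
open Ltr

/-- the counting quasimorphism -/
def phi0 : GG → ℤ := fun u => F (nf u).1

lemma defect3 (u v : GG) : |phi0 (u * v) - phi0 u - phi0 v| ≤ 3 := by
  show |F (nf (u * v)).1 - _ - _| ≤ 3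
  rw [nf_mul]
  exact core (nf u).1 (nf u).2 (nf v)

/-- the antisymmetrized quasimorphism (twice) -/
def phi2 : GG → ℤ := fun u => phi0 u - phi0 u⁻¹

lemma phi2_inv (u : GG) : phi2 u⁻¹ = - phi2 u := by simp only [phi2, inv_inv]; ring

lemma defect6 (u v : GG) : |phi2 (u * v) - phi2 u - phi2 v| ≤ 6 := by
  have h1 := defect3 u v
  have h2 := defect3 v⁻¹ u⁻¹
  simp only [phi2, mul_inv_rev]
  rw [abs_le] at h1 h2 ⊢
  constructor <;> omega

lemma comm18 (p q : GG) : phi2 ⁅p, q⁆ ≤ 18 := by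
  have e : ⁅p, q⁆ = p * q * p⁻¹ * q⁻¹ := commutatorElement_def p q
  have h1 := defect6 (p * q * p⁻¹) q⁻¹
  have h2 := defect6 (p * q) p⁻¹
  have h3 := defect6 p q
  have hp := phi2_inv p
  have hq := phi2_inv q
  rw [e]
  rw [abs_le] at h1 h2 h3
  omega

lemma prod_bound : ∀ (L : List GG), (∀ c ∈ L, phi2 c ≤ 18) → L ≠ [] →
    phi2 L.prod ≤ 24 * (L.length : ℤ) - 6 := by
  intro L
  induction L with
  | nil => intro _ h; exact absurd rfl h
  | cons c M ih =>
    intro hc _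
    cases M with
    | nil =>
      have := hc c (by simp)
      simpa using this
    | cons d M' =>
      have h1 := defect6 c (d :: M').prod
      have h2 := ih (fun z hz => hc z (by simp [hz])) (by simp)
      have h3 := hc c (by simp)
      simp only [List.prod_cons] at *
      rw [abs_le] at h1
      simp only [List.length_cons] at *
      push_cast at *
      omega

/-- the generator `ab` -/
def g0 : GG := Coprod.inl (Multiplicative.ofAdd (1 : ZMod 2)) *
  Coprod.inr (Multiplicative.ofAdd (1 : ZMod 3))

/-- normal form of `(ab)^n` -/
def pat : ℕ → List Ltr
  | 0 => []
  | n + 1 => A :: B1 :: pat n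

/-- normal form of `(ab)⁻ⁿ` -/
def pat' : ℕ → List Ltr
  | 0 => []
  | n + 1 => B2 :: A :: pat' n

lemma pat_head : ∀ n, ∀ x ∈ (pat n).head?, x = A := by
  intro n x hx
  cases n with
  | zero => simp [pat] at hx
  | succ m => simp [pat] at hx; exact hx.symm

lemma pat_red : ∀ n, Reduced (pat n) ∧ Reduced (B1 :: pat n) := by
  intro n
  induction n with
  | zero => exact ⟨reduced_nil, List.isChain_singleton _⟩
  | succ m ih =>
    refine ⟨?_, ?_⟩
    · exact List.isChain_cons_cons.mpr ⟨by simp [bty], ih.2⟩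
    · exact List.isChain_cons_cons.mpr ⟨by simp [bty],
        List.isChain_cons_cons.mpr ⟨by simp [bty], ih.2⟩⟩

lemma pat'_head : ∀ n, ∀ x ∈ (pat' n).head?, x = B2 := by
  intro n x hx
  cases n with
  | zero => simp [pat'] at hx
  | succ m => simp [pat'] at hx; exact hx.symm

lemma pat'_red : ∀ n, Reduced (pat' n) ∧ Reduced (A :: pat' n) := by
  intro n
  induction n with
  | zero => exact ⟨reduced_nil, List.isChain_singleton _⟩
  | succ m ih =>
    refine ⟨?_, ?_⟩
    · exact List.isChain_cons_cons.mpr ⟨by simp [bty], ih.2⟩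
    · exact List.isChain_cons_cons.mpr ⟨by simp [bty],
        List.isChain_cons_cons.mpr ⟨by simp [bty], ih.2⟩⟩

lemma nf_g0 : nf g0 = actL A (actL B1 eps) := by
  show rho (Coprod.inl _ * Coprod.inr _) eps = _
  rw [map_mul, end_mul,
    show (Coprod.inl (Multiplicative.ofAdd (1 : ZMod 2)) : GG) = gen A from rfl,
    show (Coprod.inr (Multiplicative.ofAdd (1 : ZMod 3)) : GG) = gen B1 from rfl,
    rho_gen, rho_gen]

lemma g0_inv : g0⁻¹ = gen B2 * gen A := by
  have h : g0 * (gen B2 * gen A) = 1 := by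
    show gen A * gen B1 * (gen B2 * gen A) = 1
    rw [mul_assoc (gen A), ← mul_assoc (gen B1), genB1_B2, one_mul, genA_mul]
  exact inv_eq_of_mul_eq_one_right h

lemma nf_g0_inv : nf g0⁻¹ = actL B2 (actL A eps) := by
  show rho g0⁻¹ eps = _
  rw [g0_inv, map_mul, end_mul, rho_gen, rho_gen]

lemma nf_g0_pow (n : ℕ) : nf (g0 ^ n) = ⟨pat n, (pat_red n).1⟩ := by
  induction n with
  | zero =>
    show rho (g0 ^ 0) eps = _
    rw [pow_zero, map_one]
    rfl
  | succ m ih =>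
    rw [pow_succ']
    rw [nf_mul, nf_g0, ih]
    apply Subtype.ext
    show (actW (actL A (actL B1 eps)).1 ⟨pat m, _⟩).1 = pat (m + 1)
    have h1 : (actL A (actL B1 eps)).1 = [A, B1] := rfl
    rw [h1]
    show (actL A (actL B1 ⟨pat m, (pat_red m).1⟩)).1 = pat (m + 1)
    have h2 : actL B1 (⟨pat m, (pat_red m).1⟩ : Red) = ⟨B1 :: pat m, (pat_red m).2⟩ := by
      apply Subtype.ext
      show rawB (pat m) = B1 :: pat m
      refine rawB_prepend ?_
      intro x hx
      have := pat_head m x hx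
      subst this
      rfl
    rw [h2]
    rfl

lemma nf_g0_inv_pow (n : ℕ) : nf (g0⁻¹ ^ n) = ⟨pat' n, (pat'_red n).1⟩ := by
  induction n with
  | zero =>
    show rho (g0⁻¹ ^ 0) eps = _
    rw [pow_zero, map_one]
    rfl
  | succ m ih =>
    rw [pow_succ']
    rw [nf_mul, nf_g0_inv, ih]
    apply Subtype.ext
    show (actW (actL B2 (actL A eps)).1 ⟨pat' m, _⟩).1 = pat' (m + 1)
    have h1 : (actL B2 (actL A eps)).1 = [B2, A] := rfl
    rw [h1]
    show (actL B2 (actL A ⟨pat' m, (pat'_red m).1⟩)).1 = pat' (m + 1)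
    have h2 : actL A (⟨pat' m, (pat'_red m).1⟩ : Red) = ⟨A :: pat' m, (pat'_red m).2⟩ := by
      apply Subtype.ext
      show rawA (pat' m) = A :: pat' m
      cases hm : pat' m with
      | nil => rfl
      | cons x s =>
        have := pat'_head m x (by rw [hm]; rfl)
        subst this
        rfl
    rw [h2]
    show rawB (rawB (A :: pat' m)) = pat' (m + 1)
    rfl

lemma F_pat (n : ℕ) : F (pat n) = n := by
  induction n with
  | zero => rfl
  | succ m ih => simp [pat, F_cons, sgn, ih]; ring

lemma F_pat' (n : ℕ) : F (pat' n) = -n := by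
  induction n with
  | zero => rfl
  | succ m ih => simp [pat', F_cons, sgn, ih]

lemma phi2_g0_pow (n : ℕ) : phi2 (g0 ^ n) = 2 * n := by
  have h1 : phi0 (g0 ^ n) = n := by
    show F (nf (g0 ^ n)).1 = n
    rw [nf_g0_pow]
    exact F_pat n
  have h2 : phi0 ((g0 ^ n)⁻¹) = -n := by
    show F (nf ((g0 ^ n)⁻¹)).1 = -n
    rw [← inv_pow, nf_g0_inv_pow]
    exact F_pat' n
  simp only [phi2, h1, h2]
  ring

end SclLower

open scoped NNReal

namespace SclLower
open Ltr

lemma genB2_B1 : gen B2 * gen B1 = 1 := by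
  show Coprod.inr _ * Coprod.inr _ = 1
  rw [← map_mul]
  have : (Multiplicative.ofAdd (2 : ZMod 3)) * (Multiplicative.ofAdd (1 : ZMod 3)) = 1 := by
    decide
  rw [this, map_one]

lemma bavard (n m : ℕ) (h : m ∈ clSet (g0 ^ n)) : (n : ℤ) ≤ 12 * m := by
  obtain ⟨f, hf⟩ := h
  rcases Nat.eq_zero_or_pos m with rfl | hm
  · have h1 : g0 ^ n = 1 := by simpa using hf
    have h2 : (2 : ℤ) * n = 0 := by
      rw [← phi2_g0_pow, h1]
      simp [phi2]
    omega
  · set L : List GG := List.ofFn fun i => ⁅(f i).1, (f i).2⁆ with hL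
    have hlen : L.length = m := by simp [hL]
    have hmem : ∀ c ∈ L, phi2 c ≤ 18 := by
      intro c hc
      rw [hL, List.mem_ofFn] at hc
      obtain ⟨i, hi⟩ := hc
      rw [← hi]
      exact comm18 _ _
    have hne : L ≠ [] := by
      intro h0
      rw [h0] at hlen
      simp at hlen
      omega
    have hpb := prod_bound L hmem hne
    rw [← hf, phi2_g0_pow, hlen] at hpb
    omega

lemma haa : gen A * gen A = 1 := genA_mul
lemma hbbb : gen B1 * gen B1 * gen B1 = 1 := by
  rw [genB1_mul, genB2_B1]

lemma upper_mem (k : ℕ) : (k + 1) ∈ clSet (g0 ^ (6 * (2 * k + 1))) := by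
  have h6 : g0 ^ (6 * (2 * k + 1)) = (g0 ^ 6) ^ (2 * k + 1) := by rw [← pow_mul]
  have hab := ab_six_comm haa hbbb
  have hg0 : g0 = gen A * gen B1 := rfl
  rw [h6, hg0, hab]
  have hconj : (gen A * gen B1 * gen B1)⁻¹ *
      ⁅gen A * gen B1 * gen B1 * gen A * gen B1, gen A * gen B1 * gen A * gen B1 * gen B1⁆ *
      (gen A * gen B1 * gen B1) =
      (gen A * gen B1 * gen B1)⁻¹ *
      ⁅gen A * gen B1 * gen B1 * gen A * gen B1, gen A * gen B1 * gen A * gen B1 * gen B1⁆ *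
      ((gen A * gen B1 * gen B1)⁻¹)⁻¹ := by rw [inv_inv]
  rw [hconj, conj_pow]
  exact clSet_conj _ (culler k _ _)

end SclLower


open SclLower

/-- In `(ℤ/2) ⋆ (ℤ/3)` with generators `a` of order two and `b` of order three,
`scl(ab) = 1/12`. -/
theorem scl_ab_eq_one_twelfth :
    sclE ((Coprod.inl (Multiplicative.ofAdd (1 : ZMod 2)) :
        Coprod (Multiplicative (ZMod 2)) (Multiplicative (ZMod 3))) *
      Coprod.inr (Multiplicative.ofAdd (1 : ZMod 3))) = 1 / 12 := by
  show sclE g0 = 1 / 12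
  have h12ne : (12 : ℝ≥0∞) ≠ 0 := by norm_num
  have h12nt : (12 : ℝ≥0∞) ≠ ⊤ := by norm_num
  apply le_antisymm
  · -- upper bound
    apply ENNReal.le_of_forall_pos_le_add
    intro ε hε _
    set k : ℕ := ⌈(ε⁻¹ : ℝ≥0)⌉₊ with hk
    have hpos : 0 < 6 * (2 * k + 1) := by positivity
    have h1 : sclE g0 ≤ clE (g0 ^ (6 * (2 * k + 1))) / ((6 * (2 * k + 1) : ℕ) : ℝ≥0∞) := by
      have := iInf_le (fun n : ℕ+ => clE (g0 ^ (n : ℕ)) / ((n : ℕ) : ℝ≥0∞))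
        (⟨6 * (2 * k + 1), hpos⟩ : ℕ+)
      unfold sclE
      simpa using this
    have h2 : clE (g0 ^ (6 * (2 * k + 1))) ≤ ((k + 1 : ℕ) : ℝ≥0∞) :=
      sInf_le ⟨k + 1, upper_mem k, rfl⟩
    have hb0 : ((6 * (2 * k + 1) : ℕ) : ℝ≥0∞) ≠ 0 :=
      Nat.cast_ne_zero.mpr hpos.ne'
    have hbt : ((6 * (2 * k + 1) : ℕ) : ℝ≥0∞) ≠ ⊤ := by
      exact ENNReal.natCast_ne_top _
    have h3 : ((k + 1 : ℕ) : ℝ≥0∞) / ((6 * (2 * k + 1) : ℕ) : ℝ≥0∞) ≤ 1 / 12 + ε := by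
      rw [ENNReal.div_le_iff_le_mul (Or.inl hb0) (Or.inl hbt)]
      have e1 : ((6 * (2 * k + 1) : ℕ) : ℝ≥0∞) = 12 * k + 6 := by push_cast; ring
      rw [e1]
      have hA : (k : ℝ≥0∞) ≤ (1 / 12) * (12 * k + 6) := by
        have : (1 / 12 : ℝ≥0∞) * (12 * k) ≤ (1 / 12) * (12 * k + 6) :=
          mul_le_mul_right le_self_add _
        refine le_trans (le_of_eq ?_) this
        rw [one_div, ← mul_assoc, ENNReal.inv_mul_cancel h12ne h12nt, one_mul]
      have hB : (1 : ℝ≥0∞) ≤ (ε : ℝ≥0∞) * (12 * k + 6) := by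
        have hε0 : (ε : ℝ≥0) ≠ 0 := ne_of_gt hε
        have hki : (ε⁻¹ : ℝ≥0) ≤ (k : ℝ≥0) := by
          exact_mod_cast Nat.le_ceil (ε⁻¹ : ℝ≥0)
        have h1' : (1 : ℝ≥0∞) = (ε : ℝ≥0∞) * ((ε⁻¹ : ℝ≥0) : ℝ≥0∞) := by
          rw [← ENNReal.coe_mul, mul_inv_cancel₀ hε0, ENNReal.coe_one]
        rw [h1']
        refine mul_le_mul_right ?_ _
        have step1 : ((ε⁻¹ : ℝ≥0) : ℝ≥0∞) ≤ (k : ℝ≥0∞) := by exact_mod_cast hki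
        have step2 : (k : ℝ≥0∞) ≤ 12 * k := by
          nth_rewrite 1 [← one_mul (k : ℝ≥0∞)]
          exact mul_le_mul_left (by norm_num) _
        exact le_trans step1 (le_trans step2 le_self_add)
      calc ((k + 1 : ℕ) : ℝ≥0∞) = (k : ℝ≥0∞) + 1 := by push_cast; ring
        _ ≤ (1 / 12) * (12 * k + 6) + (ε : ℝ≥0∞) * (12 * k + 6) := add_le_add hA hB
        _ = (1 / 12 + ε) * (12 * k + 6) := by rw [add_mul]
    exact le_trans h1 (le_trans (ENNReal.div_le_div_right h2 _) h3)
  · -- lower bound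
    refine le_iInf ?_
    intro n
    have hn0 : ((n : ℕ) : ℝ≥0∞) ≠ 0 := by
      simp [n.pos.ne']
    have hnt : ((n : ℕ) : ℝ≥0∞) ≠ ⊤ := ENNReal.natCast_ne_top _
    rw [ENNReal.le_div_iff_mul_le (Or.inl hn0) (Or.inl hnt)]
    refine le_sInf ?_
    rintro x ⟨m, hm, rfl⟩
    have hb := bavard (n : ℕ) m hm
    have hn' : (n : ℕ) ≤ 12 * m := by exact_mod_cast hb
    calc (1 / 12 : ℝ≥0∞) * ((n : ℕ) : ℝ≥0∞)
        ≤ (1 / 12) * ((12 * m : ℕ) : ℝ≥0∞) := by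
          exact mul_le_mul_right (by exact_mod_cast hn') _
      _ = ((m : ℕ) : ℝ≥0∞) := by
          push_cast
          rw [one_div, ← mul_assoc, ENNReal.inv_mul_cancel h12ne h12nt, one_mul]
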